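/- Let d be a positive integer. Let b : ℝ^d × ℝ^d → ℝ, c : ℝ^d → ℝ, ρ : ℝ^d → ℝ and a : ℝ^d → ℝ be measurable with b(x, z) > 0 for all x, z and ρ ≥ 0, and let s : ℝ^d → ℝ^d be bounded and measurable. Assume that for every x ∈ ℝ^d: (i) a(x) = ∫_{ℝ^d} b(x, z) c(z) dz; (ii) for every z the map x' ↦ b(x', z) is differentiable at x with gradient ∇_x b(x, z); (iii) a is differentiable at x with ∇a(x) = ∫_{ℝ^d} ∇_x b(x, z) c(z) dz. Assume moreover that the function (x, z) ↦ ‖∇_x b(x, z)‖ · |c(z)| · ρ(x) is integrable on ℝ^d × ℝ^d. Then ∫_{ℝ^d} ⟨s(x), ∇a(x)⟩ ρ(x) dx = ∫_{ℝ^d} ∫_{ℝ^d} ⟨s(x), ∇_x log b(x, z)⟩ · ρ(x) · b(x, z) · c(z) dz dx, where ∇_x log b(x, z) = ∇_x b(x, z)/b(x, z). -/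

import Mathlib

open MeasureTheory Real
open scoped RealInnerProductSpace

/-- Measurability in the parameter of a pointwise gradient of a jointly measurable function. -/
lemma measurable_grad_param {d : ℕ}
    (b : EuclideanSpace ℝ (Fin d) × EuclideanSpace ℝ (Fin d) → ℝ)
    (G : EuclideanSpace ℝ (Fin d) → EuclideanSpace ℝ (Fin d))
    (x : EuclideanSpace ℝ (Fin d))
    (hb_meas : Measurable b)
    (hG : ∀ z, HasGradientAt (fun x' => b (x', z)) (G z) x) :
    Measurable G := by
  refine (MeasurableEmbedding.measurable_comp_iff (f := G)
    (MeasurableEquiv.toLp 2 (Fin d → ℝ)).symm.measurableEmbedding).mp ?_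
  apply measurable_pi_lambda
  intro i
  set e : EuclideanSpace ℝ (Fin d) := EuclideanSpace.single i (1 : ℝ) with he
  -- derivative of t ↦ b (x + t • e, z) at 0 is ⟪G z, e⟫
  have hline : ∀ z, HasDerivAt (fun t : ℝ => b (x + t • e, z)) (⟪G z, e⟫) 0 := by
    intro z
    have hφ : HasDerivAt (fun t : ℝ => x + t • e) e 0 := by
      simpa using ((hasDerivAt_id (0 : ℝ)).smul_const e).const_add x
    have hfd := (hG z).hasFDerivAt
    have hfd' : HasFDerivAt (fun x' => b (x', z))
        ((InnerProductSpace.toDual ℝ (EuclideanSpace ℝ (Fin d))) (G z))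
        ((fun t : ℝ => x + t • e) 0) := by simpa using hfd
    have := hfd'.comp_hasDerivAt 0 hφ
    exact this
  -- express G z i as a limit of measurable difference quotients
  have hu : Filter.Tendsto (fun n : ℕ => 1 / ((n : ℝ) + 1)) Filter.atTop (nhds 0) :=
    tendsto_one_div_add_atTop_nhds_zero_nat
  have hu' : Filter.Tendsto (fun n : ℕ => 1 / ((n : ℝ) + 1)) Filter.atTop
      (nhdsWithin 0 {(0 : ℝ)}ᶜ) := by
    refine tendsto_nhdsWithin_of_tendsto_nhds_of_eventually_within _ hu ?_
    filter_upwards with n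
    have : (0 : ℝ) < 1 / ((n : ℝ) + 1) := by positivity
    simpa using this.ne'
  have key : ∀ z, Filter.Tendsto
      (fun n : ℕ => (b (x + (1 / ((n : ℝ) + 1)) • e, z) - b (x, z)) / (1 / ((n : ℝ) + 1)))
      Filter.atTop (nhds (G z i)) := by
    intro z
    have hsl := (hasDerivAt_iff_tendsto_slope.mp (hline z)).comp hu'
    have hGe : ⟪G z, e⟫ = G z i := by
      rw [he, EuclideanSpace.inner_single_right]; simp
    rw [hGe] at hsl
    refine hsl.congr fun n => ?_
    simp [slope, Function.comp, vsub_eq_sub, div_eq_inv_mul]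
  refine measurable_of_tendsto_metrizable (f := fun n z =>
    (b (x + (1 / ((n : ℝ) + 1)) • e, z) - b (x, z)) / (1 / ((n : ℝ) + 1))) ?_ ?_
  · intro n
    exact ((hb_meas.comp measurable_prodMk_left).sub
      (hb_meas.comp measurable_prodMk_left)).div_const _
  · rw [tendsto_pi_nhds]; exact key

/-- Cross-term identity: under Chapman–Kolmogorov and differentiation under the integral
sign, `∫ ⟪s x, ∇a x⟫ ρ x dx = ∫ ∫ ⟪s x, ∇ log b (x, z)⟫ ρ x b (x, z) c z dz dx`. -/
theorem cross_term_identity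
    (d : ℕ) (hd : 0 < d)
    (b : EuclideanSpace ℝ (Fin d) × EuclideanSpace ℝ (Fin d) → ℝ)
    (c : EuclideanSpace ℝ (Fin d) → ℝ)
    (ρ : EuclideanSpace ℝ (Fin d) → ℝ)
    (a : EuclideanSpace ℝ (Fin d) → ℝ)
    (s : EuclideanSpace ℝ (Fin d) → EuclideanSpace ℝ (Fin d))
    (Gb : EuclideanSpace ℝ (Fin d) → EuclideanSpace ℝ (Fin d) → EuclideanSpace ℝ (Fin d))
    (hb_meas : Measurable b) (hc_meas : Measurable c) (hρ_meas : Measurable ρ)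
    (ha_meas : Measurable a) (hs_meas : Measurable s)
    (hs_bdd : ∃ C, ∀ x, ‖s x‖ ≤ C)
    (hb_pos : ∀ x z, 0 < b (x, z))
    (hρ_nonneg : ∀ x, 0 ≤ ρ x)
    (hCK : ∀ x, a x = ∫ z, b (x, z) * c z)
    (hGb : ∀ x z, HasGradientAt (fun x' => b (x', z)) (Gb x z) x)
    (ha : ∀ x, HasGradientAt a (∫ z, c z • Gb x z) x)
    (hInt : Integrable (fun p : EuclideanSpace ℝ (Fin d) × EuclideanSpace ℝ (Fin d) =>
      ‖Gb p.1 p.2‖ * |c p.2| * ρ p.1)) :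
    ∫ x, ⟪s x, gradient a x⟫ * ρ x
      = ∫ x, ∫ z, ⟪s x, (b (x, z))⁻¹ • Gb x z⟫ * (ρ x * (b (x, z) * c z)) := by
  apply integral_congr_ae
  filter_upwards [hInt.prod_right_ae] with x hx
  -- simplify the inner integrand
  have hin : ∀ z, ⟪s x, (b (x, z))⁻¹ • Gb x z⟫ * (ρ x * (b (x, z) * c z))
      = ρ x * ⟪s x, c z • Gb x z⟫ := by
    intro z
    rw [real_inner_smul_right, real_inner_smul_right]
    have hbne := (hb_pos x z).ne'
    have h1 : (b (x, z))⁻¹ * ⟪s x, Gb x z⟫ * (ρ x * (b (x, z) * c z))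
        = ((b (x, z))⁻¹ * b (x, z)) * (⟪s x, Gb x z⟫ * ρ x * c z) := by ring
    rw [h1, inv_mul_cancel₀ hbne, one_mul]
    ring
  rcases eq_or_lt_of_le (hρ_nonneg x) with hρ0 | hρ0
  · simp only [← hρ0, mul_zero, zero_mul, mul_comm]
    simp [hin, ← hρ0]
  · -- ρ x > 0 : integrability in z
    have hGmeas : Measurable (fun z => Gb x z) :=
      measurable_grad_param b (Gb x) x hb_meas (fun z => hGb x z)
    have hint1 : Integrable (fun z => ‖Gb x z‖ * |c z|) := by
      have := hx.mul_const (ρ x)⁻¹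
      refine this.congr ?_
      filter_upwards with z
      rw [mul_assoc, mul_inv_cancel₀ hρ0.ne', mul_one]
    have hint2 : Integrable (fun z => c z • Gb x z) := by
      refine ⟨(hc_meas.smul hGmeas).aestronglyMeasurable, ?_⟩
      refine HasFiniteIntegral.mono' hint1.2 ?_
      filter_upwards with z
      rw [norm_smul]
      simp [mul_comm, abs_mul, le_refl]
    calc ⟪s x, gradient a x⟫ * ρ x
        = ρ x * ⟪s x, ∫ z, c z • Gb x z⟫ := by rw [(ha x).gradient, mul_comm]
      _ = ρ x * ∫ z, ⟪s x, c z • Gb x z⟫ := by rw [integral_inner hint2]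
      _ = ∫ z, ρ x * ⟪s x, c z • Gb x z⟫ := (integral_const_mul _ _).symm
      _ = ∫ z, ⟪s x, (b (x, z))⁻¹ • Gb x z⟫ * (ρ x * (b (x, z) * c z)) := by
          exact integral_congr_ae (Filter.Eventually.of_forall fun z => (hin z).symm)
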